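/- Assume (B1)–(B3) and let λ > 0, σ ∈ (0,1), c > 0, z⁻ ∈ H, p⁻ ∈ ℝ^ℓ. Suppose (z, v, ε) ∈ H × ℝ^n × ℝ_+ satisfies the prox condition with data (λ, σ, c, z⁻, p⁻), and set p := Π_{K*}(p⁻ + c g(z)) and r := v + z⁻ − z. Then L_c(z;p) ≤ L_c(z;p⁻) + (1/c)‖p − p⁻‖², and L_c(z;p) ≤ L_c(z⁻;p⁻) − ((1−σ²)/(2λ))‖r‖² + (1/c)‖p − p⁻‖². -/

import Mathlib

open RealInnerProductSpace Pointwise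

/-- The dual cone of a set in a real inner product space. -/
def dualCone {F : Type*} [NormedAddCommGroup F] [InnerProductSpace ℝ F] (K : Set F) : Set F :=
  {y | ∀ x ∈ K, 0 ≤ ⟪y, x⟫}

/-- `p` is the Euclidean projection of `x` onto `S`. -/
def IsProjOn {F : Type*} [NormedAddCommGroup F] [InnerProductSpace ℝ F]
    (S : Set F) (x p : F) : Prop :=
  p ∈ S ∧ ∀ y ∈ S, dist x p ≤ dist x y

/-- `g` is `K`-convex. -/
def KConvex {E F : Type*} [NormedAddCommGroup E] [InnerProductSpace ℝ E]
    [NormedAddCommGroup F] [InnerProductSpace ℝ F] (K : Set F) (g : E → F) : Prop :=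
  ∀ z z' : E, ∀ t : ℝ, t ∈ Set.Icc (0 : ℝ) 1 →
    g (t • z' + (1 - t) • z) - t • g z' - (1 - t) • g z ∈ -K

/-- The ε-subdifferential at `z` of a proper extended-real-valued function represented by
its effective domain `D` and its real values `ψ` on `D` (the function equals `+∞` off `D`). -/
def epsSubdiff {E : Type*} [NormedAddCommGroup E] [InnerProductSpace ℝ E]
    (D : Set E) (ψ : E → ℝ) (ε : ℝ) (z : E) : Set E :=
  {u | ∀ z' ∈ D, ψ z + ⟪u, z' - z⟫ - ε ≤ ψ z'}

/-- The augmented Lagrangian `L_c(z;p)`; the proper closed convex function `h` is represented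
by its real values on its effective domain `H`. -/
noncomputable def AugLag {E F : Type*} [NormedAddCommGroup E] [InnerProductSpace ℝ E]
    [NormedAddCommGroup F] [InnerProductSpace ℝ F]
    (K : Set F) (f h : E → ℝ) (g : E → F) (c : ℝ) (z : E) (p : F) : ℝ :=
  f z + h z + (1 / (2 * c)) * ((Metric.infDist (p + c • g z) (-K)) ^ 2 - ‖p‖ ^ 2)


theorem isProjOn_inner_le {F : Type*} [NormedAddCommGroup F] [InnerProductSpace ℝ F]
    {S : Set F} (hS : Convex ℝ S) {x p : F} (hp : IsProjOn S x p) :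
    ∀ w ∈ S, ⟪x - p, w - p⟫ ≤ 0 := by
  haveI : Nonempty S := ⟨⟨p, hp.1⟩⟩
  have h1 : ‖x - p‖ = ⨅ w : S, ‖x - w‖ := by
    refine le_antisymm (le_ciInf fun w => by simpa [dist_eq_norm] using hp.2 w w.2) ?_
    exact ciInf_le ⟨(0:ℝ), by rintro b ⟨w, rfl⟩; exact norm_nonneg _⟩ (⟨p, hp.1⟩ : S)
  exact (norm_eq_iInf_iff_real_inner_le_zero hS hp.1).1 h1

theorem dualCone_convex {F : Type*} [NormedAddCommGroup F] [InnerProductSpace ℝ F]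
    (K : Set F) : Convex ℝ (dualCone K) := by
  intro y1 h1 y2 h2 a b ha hb hab x hx
  have := h1 x hx; have := h2 x hx
  rw [inner_add_left, real_inner_smul_left, real_inner_smul_left]
  positivity

set_option maxHeartbeats 1000000 in
/-- decrease of the augmented Lagrangian along one NL-IAPIAL prox step
(Lemma 4.4 of the paper). -/
theorem auglag_decrease
    {E F : Type*}
    [NormedAddCommGroup E] [InnerProductSpace ℝ E] [FiniteDimensional ℝ E]
    [NormedAddCommGroup F] [InnerProductSpace ℝ F] [FiniteDimensional ℝ F]
    -- K is a nonempty closed convex cone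
    (K : Set F) (hKne : K.Nonempty) (hKcl : IsClosed K) (hKcvx : Convex ℝ K)
    (hKcone : ∀ t : ℝ, 0 < t → ∀ x ∈ K, t • x ∈ K)
    -- (B1): h proper closed convex, K_h-Lipschitz on its compact domain H of diameter ≤ Dh
    (H : Set E) (h : E → ℝ) (Kh Dh : ℝ) (hKh : 0 < Kh) (hDh0 : 0 < Dh)
    (hHne : H.Nonempty) (hHcpt : IsCompact H) (hHcvx : Convex ℝ H)
    (hhcvx : ConvexOn ℝ H h)
    (hhlip : ∀ x ∈ H, ∀ y ∈ H, |h x - h y| ≤ Kh * ‖x - y‖)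
    (hDh : ∀ x ∈ H, ∀ y ∈ H, ‖x - y‖ ≤ Dh)
    -- (B2): f differentiable on H with lower curvature m_f and L_f-Lipschitz gradient
    (f : E → ℝ) (f' : E → E) (mf Lf : ℝ) (hmf : 0 < mf) (hLf : 0 < Lf)
    (hfdiff : ∀ z ∈ H, HasGradientAt f (f' z) z)
    (hflow : ∀ z ∈ H, ∀ z' ∈ H, -(mf / 2) * ‖z' - z‖ ^ 2 ≤ f z' - f z - ⟪f' z, z' - z⟫)
    (hflip : ∀ z ∈ H, ∀ z' ∈ H, ‖f' z' - f' z‖ ≤ Lf * ‖z' - z‖)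
    -- (B3): g K-convex and differentiable with L_g-Lipschitz derivative
    (g : E → F) (g' : E → (E →L[ℝ] F)) (Lg : ℝ) (hLg : 0 < Lg)
    (hgdiff : ∀ z, HasFDerivAt g (g' z) z) (hgK : KConvex K g)
    (hglip : ∀ z z' : E, ‖g' z' - g' z‖ ≤ Lg * ‖z' - z‖)
    -- bounds B_g⁽⁰⁾ and B_g⁽¹⁾
    (Bg0 Bg1 : ℝ) (hBg0 : ∀ z ∈ H, ‖g z‖ ≤ Bg0) (hBg1 : ∀ z ∈ H, ‖g' z‖ ≤ Bg1)
    -- data of the prox subproblem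
    (lam σ c : ℝ) (hlam : 0 < lam) (hσ0 : 0 < σ) (hσ1 : σ < 1) (hc : 0 < c)
    (zm : E) (hzm : zm ∈ H) (pm : F)
    (Lψ : ℝ) (hLψ : Lψ = lam * (Lf + Lg * ‖pm‖ + c * (Bg0 * Lg + Bg1 ^ 2)) + 1)
    (σ' : ℝ) (hσ' : σ' = σ / Real.sqrt Lψ)
    -- the inexact solution (z, v, ε) of the prox subproblem
    (z : E) (hz : z ∈ H) (v : E) (ε : ℝ) (hε : 0 ≤ ε)
    (hv : v ∈ epsSubdiff H
      (fun u => lam * AugLag K f h g c u pm + (1 / 2) * ‖u - zm‖ ^ 2) ε z)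
    (hvineq : ‖v‖ ^ 2 + 2 * ε ≤ σ' ^ 2 * ‖v + zm - z‖ ^ 2)
    -- multiplier update and residual
    (p : F) (hp : IsProjOn (dualCone K) (pm + c • g z) p)
    (r : E) (hr : r = v + zm - z) :
    -- conclusions
    AugLag K f h g c z p ≤ AugLag K f h g c z pm + (1 / c) * ‖p - pm‖ ^ 2 ∧
    AugLag K f h g c z p ≤ AugLag K f h g c zm pm
      - ((1 - σ ^ 2) / (2 * lam)) * ‖r‖ ^ 2 + (1 / c) * ‖p - pm‖ ^ 2 := by
  classical
  set q : F := pm + c • g z with hq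
  have hpK : p ∈ dualCone K := hp.1
  have hvar : ∀ w ∈ dualCone K, ⟪q - p, w - p⟫ ≤ 0 :=
    isProjOn_inner_le (dualCone_convex K) hp
  -- orthogonality ⟪q - p, p⟫ = 0
  have h2p : (2:ℝ) • p ∈ dualCone K := by
    intro x hx
    rw [real_inner_smul_left]
    nlinarith [hpK x hx]
  have hhalfp : (1/2:ℝ) • p ∈ dualCone K := by
    intro x hx
    rw [real_inner_smul_left]
    nlinarith [hpK x hx]
  have horth : ⟪q - p, p⟫ = 0 := by
    have e1 := hvar _ h2p
    have e2 := hvar _ hhalfp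
    rw [show (2:ℝ) • p - p = p by module] at e1
    rw [show (1/2:ℝ) • p - p = (-(1/2):ℝ) • p by module, real_inner_smul_right] at e2
    linarith
  have hneg : ∀ y ∈ dualCone K, ⟪q - p, y⟫ ≤ 0 := by
    intro y hy
    have hpy : p + y ∈ dualCone K := by
      intro x hx
      rw [inner_add_left]
      have := hpK x hx; have := hy x hx; linarith
    have := hvar _ hpy
    rwa [add_sub_cancel_left] at this
  -- q - p ∈ -K via the bipolar theorem
  have hsK : p - q ∈ K := by
    have h0K : (0:F) ∈ K := by
      obtain ⟨k, hk⟩ := hKne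
      have ht : Filter.Tendsto (fun n : ℕ => (1 / ((n:ℝ) + 1)) • k) Filter.atTop
          (nhds ((0:ℝ) • k)) := tendsto_one_div_add_atTop_nhds_zero_nat.smul_const k
      rw [zero_smul] at ht
      exact hKcl.mem_of_tendsto ht (Filter.Eventually.of_forall fun n =>
        hKcone _ (by positivity) k hk)
    let C : ProperCone ℝ F :=
      { carrier := K
        zero_mem' := h0K
        smul_mem' := fun t x hx => by
          show (t.1 : ℝ) • x ∈ K
          rcases eq_or_lt_of_le t.2 with ht | ht
          · rw [← ht, zero_smul]; exact h0K
          · exact hKcone _ ht x hx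
        isClosed' := hKcl
        add_mem' := fun {x y} hx hy => by
          have hmid : (1/2:ℝ) • x + (1/2:ℝ) • y ∈ K :=
            hKcvx hx hy (by norm_num) (by norm_num) (by norm_num)
          have := hKcone 2 (by norm_num) _ hmid
          rwa [show (2:ℝ) • ((1/2:ℝ) • x + (1/2:ℝ) • y) = x + y by module] at this }
    have hbip := ProperCone.innerDual_innerDual C
    have hmem : p - q ∈ ProperCone.innerDual (ProperCone.innerDual (C : Set F) : Set F) := by
      rw [ProperCone.mem_innerDual]
      intro x hx
      have hxd : x ∈ dualCone K := by
        rw [SetLike.mem_coe, ProperCone.mem_innerDual] at hx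
        intro k hk
        rw [real_inner_comm]
        exact hx hk
      have h1 := hneg x hxd
      have h2 : ⟪x, p - q⟫ = -⟪q - p, x⟫ := by
        rw [show p - q = -(q - p) by abel, inner_neg_right, real_inner_comm]
      linarith
    rw [hbip] at hmem
    exact hmem
  have hsnegK : q - p ∈ -K := by
    rw [Set.mem_neg, neg_sub]; exact hsK
  have hKnegne : (-K : Set F).Nonempty := ⟨q - p, hsnegK⟩
  haveI : Nonempty (-K : Set F) := ⟨⟨q - p, hsnegK⟩⟩
  -- dist(q, -K) = ‖p‖
  have hA : Metric.infDist q (-K) = ‖p‖ := by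
    refine le_antisymm ?_ ?_
    · have := Metric.infDist_le_dist_of_mem (x := q) hsnegK
      rwa [dist_eq_norm, sub_sub_cancel] at this
    · rw [Metric.infDist_eq_iInf]
      refine le_ciInf fun ⟨y, hy⟩ => ?_
      rw [Set.mem_neg] at hy
      have hpy : (0:ℝ) ≤ ⟪p, -y⟫ := hpK (-y) hy
      have hdecomp : q - y = p + ((q - p) - y) := by abel
      have hqp : ⟪p, q - p⟫ = (0:ℝ) := by rw [real_inner_comm]; exact horth
      have hps : ⟪p, (q - p) - y⟫ = -⟪p, y⟫ := by
        rw [inner_sub_right, hqp]; ring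
      have hsq : ‖p‖ ^ 2 ≤ ‖q - y‖ ^ 2 := by
        rw [hdecomp, norm_add_sq_real, hps]
        have : -⟪p, y⟫ = ⟪p, -y⟫ := by rw [inner_neg_right]
        nlinarith [sq_nonneg ‖(q - p) - y‖, norm_nonneg ((q - p) - y)]
      have := Real.sqrt_le_sqrt hsq
      rw [Real.sqrt_sq (norm_nonneg _), Real.sqrt_sq (norm_nonneg _)] at this
      rwa [dist_eq_norm]
  -- dist(p + c g z, -K) ≤ ‖2p - pm‖
  have hB : Metric.infDist (p + c • g z) (-K) ≤ ‖(2:ℝ) • p - pm‖ := by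
    have := Metric.infDist_le_dist_of_mem (x := p + c • g z) hsnegK
    rwa [dist_eq_norm, show p + c • g z - (q - p) = (2:ℝ) • p - pm by rw [hq]; module] at this
  have hBsq : Metric.infDist (p + c • g z) (-K) ^ 2 ≤ ‖(2:ℝ) • p - pm‖ ^ 2 := by
    have h0 := Metric.infDist_nonneg (x := p + c • g z) (s := (-K : Set F))
    exact pow_le_pow_left₀ h0 hB 2
  have e1 : ‖(2:ℝ) • p - pm‖ ^ 2 = 4 * ‖p‖ ^ 2 - 4 * ⟪p, pm⟫ + ‖pm‖ ^ 2 := by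
    rw [norm_sub_sq_real, real_inner_smul_left, norm_smul]
    simp [abs_of_nonneg]
    ring
  have e2 : ‖p - pm‖ ^ 2 = ‖p‖ ^ 2 - 2 * ⟪p, pm⟫ + ‖pm‖ ^ 2 := by
    rw [norm_sub_sq_real]
  -- first conclusion
  have h2c : (0:ℝ) < 1 / (2 * c) := by positivity
  have concl1 : AugLag K f h g c z p ≤ AugLag K f h g c z pm + (1 / c) * ‖p - pm‖ ^ 2 := by
    unfold AugLag
    rw [← hq, hA]
    have key : Metric.infDist (p + c • g z) (-K) ^ 2 - ‖p‖ ^ 2 ≤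
        (‖p‖ ^ 2 - ‖pm‖ ^ 2) + 2 * ‖p - pm‖ ^ 2 := by linarith [hBsq, e1, e2]
    have hmul := mul_le_mul_of_nonneg_left key h2c.le
    have hconv : (1 / c) * ‖p - pm‖ ^ 2 = (1 / (2 * c)) * (2 * ‖p - pm‖ ^ 2) := by
      field_simp
    linarith [hmul, hconv.le, hconv.ge]
  -- second conclusion
  have hBg0nn : (0:ℝ) ≤ Bg0 := le_trans (norm_nonneg _) (hBg0 z hz)
  have hLψ1 : (1:ℝ) ≤ Lψ := by
    rw [hLψ]
    have t1 : (0:ℝ) ≤ Lf + Lg * ‖pm‖ + c * (Bg0 * Lg + Bg1 ^ 2) := by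
      have := mul_nonneg hLg.le (norm_nonneg pm)
      have := mul_nonneg hc.le (add_nonneg (mul_nonneg hBg0nn hLg.le) (sq_nonneg Bg1))
      linarith
    linarith [mul_nonneg hlam.le t1]
  have hσ'sq : σ' ^ 2 = σ ^ 2 / Lψ := by
    rw [hσ', div_pow, Real.sq_sqrt (by linarith)]
  have hσ'le : σ' ^ 2 ≤ σ ^ 2 := by
    rw [hσ'sq]; exact div_le_self (sq_nonneg σ) hLψ1
  have hid : ‖r‖ ^ 2 = ‖v‖ ^ 2 + 2 * ⟪v, zm - z⟫ + ‖zm - z‖ ^ 2 := by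
    rw [hr, show v + zm - z = v + (zm - z) by abel, norm_add_sq_real]
  have hsub := hv zm hzm
  simp only [sub_self, norm_zero, ne_eq, OfNat.ofNat_ne_zero, not_false_eq_true, zero_pow,
    mul_zero, add_zero] at hsub
  have hnr2 : ‖z - zm‖ ^ 2 = ‖zm - z‖ ^ 2 := by rw [norm_sub_rev]
  have hnormrev : ‖z - zm‖ = ‖zm - z‖ := norm_sub_rev _ _
  have hvineq' : ‖v‖ ^ 2 + 2 * ε ≤ σ' ^ 2 * ‖r‖ ^ 2 := by rw [hr]; exact hvineq
  have hmulσ : σ' ^ 2 * ‖r‖ ^ 2 ≤ σ ^ 2 * ‖r‖ ^ 2 :=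
    mul_le_mul_of_nonneg_right hσ'le (sq_nonneg _)
  have key2 : lam * AugLag K f h g c z pm ≤
      lam * AugLag K f h g c zm pm - (1 - σ ^ 2) / 2 * ‖r‖ ^ 2 := by
    linarith [hsub, hid, hvineq', hmulσ, hnr2]
  have hfin : AugLag K f h g c z pm ≤
      AugLag K f h g c zm pm - (1 - σ ^ 2) / (2 * lam) * ‖r‖ ^ 2 := by
    have hlamdiv : lam * ((1 - σ ^ 2) / (2 * lam) * ‖r‖ ^ 2) = (1 - σ ^ 2) / 2 * ‖r‖ ^ 2 := by
      field_simp
    have h' : lam * AugLag K f h g c z pm ≤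
        lam * (AugLag K f h g c zm pm - (1 - σ ^ 2) / (2 * lam) * ‖r‖ ^ 2) := by
      rw [mul_sub, hlamdiv]; linarith
    exact (mul_le_mul_iff_right₀ hlam).mp h'
  exact ⟨concl1, by linarith⟩
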